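/- arXiv:2202.10717 — 2 statements merged into one kernel-verified Lean document; each statement's English description precedes it below -/
import Mathlib

section
/- Differential privacy of layered circuits with global depolarizing noise: let A = D_{p_n} ∘ C_n ∘ ⋯ ∘ D_{p_1} ∘ C_1, where each C_i is a quantum channel on a D-dimensional system and D_{p_i} is the depolarizing channel with parameter 0 ≤ p_i ≤ 1, and set p⋆ := 1 − ∏_{i=1}^n (1 − p_i). Then for any ε ≥ 0, κ ≥ 0 and any density operators ρ, σ with (1/2)‖ρ − σ‖₁ ≤ κ, E_{e^ε}(A(ρ)‖A(σ)) ≤ max{0, (1 − e^ε)·p⋆/D + (1 − p⋆)·κ}. -/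
open scoped BigOperators ComplexOrder

/-- Trace of the positive part of a Hermitian matrix (0 if not Hermitian). -/
noncomputable def posPartTrace {n : Type*} [Fintype n] [DecidableEq n]
    (X : Matrix n n ℂ) : ℝ :=
  if h : X.IsHermitian then ∑ i, max (h.eigenvalues i) 0 else 0

/-- The quantum hockey-stick divergence `E_γ(ρ‖σ) = Tr[(ρ - γσ)₊]`. -/
noncomputable def hsDiv {n : Type*} [Fintype n] [DecidableEq n]
    (γ : ℝ) (ρ σ : Matrix n n ℂ) : ℝ :=
  posPartTrace (ρ - (γ : ℂ) • σ)

/-- A density operator: positive semidefinite with unit trace. -/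
def IsDensity {n : Type*} [Fintype n] [DecidableEq n] (ρ : Matrix n n ℂ) : Prop :=
  ρ.PosSemidef ∧ ρ.trace = 1

/-- Trace norm: the sum of the singular values. -/
noncomputable def traceNorm {n : Type*} [Fintype n] [DecidableEq n]
    (X : Matrix n n ℂ) : ℝ :=
  ∑ i, Real.sqrt ((Matrix.posSemidef_conjTranspose_mul_self X).isHermitian.eigenvalues i)

/-- Completely positive trace-preserving linear map. -/
def IsCPTP {n m : Type*} [Fintype n] [DecidableEq n] [Fintype m] [DecidableEq m]
    (Φ : Matrix n n ℂ →ₗ[ℂ] Matrix m m ℂ) : Prop :=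
  (∀ k : ℕ, ∀ X : Matrix (Fin k × n) (Fin k × n) ℂ, X.PosSemidef →
      (Matrix.of fun p q : Fin k × m =>
        Φ (Matrix.of fun i j => X (p.1, i) (q.1, j)) p.2 q.2).PosSemidef) ∧
  (∀ X, (Φ X).trace = X.trace)

/-- Contraction coefficient of a channel for the hockey-stick divergence. -/
noncomputable def contractionCoeff {n : Type*} [Fintype n] [DecidableEq n]
    (γ : ℝ) (Φ : Matrix n n ℂ →ₗ[ℂ] Matrix n n ℂ) : ℝ :=
  sSup {x : ℝ | ∃ ρ σ : Matrix n n ℂ, IsDensity ρ ∧ IsDensity σ ∧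
    0 < hsDiv γ ρ σ ∧ x = hsDiv γ (Φ ρ) (Φ σ) / hsDiv γ ρ σ}

/-- The depolarizing channel `D_p(ρ) = (1-p)ρ + p Tr(ρ) I/D` on a `D`-dimensional system. -/
noncomputable def depol (D : ℕ) (p : ℝ) :
    Matrix (Fin D) (Fin D) ℂ →ₗ[ℂ] Matrix (Fin D) (Fin D) ℂ where
  toFun ρ := (1 - (p : ℂ)) • ρ + (((p : ℂ) / D) * ρ.trace) • (1 : Matrix (Fin D) (Fin D) ℂ)
  map_add' X Y := by
    simp [Matrix.trace_add, mul_add, add_smul]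
    abel
  map_smul' c X := by
    simp [Matrix.trace_smul, smul_smul, smul_add]
    ring_nf

/-- The noisy layered algorithm `A = D_{p_n} ∘ C_n ∘ ⋯ ∘ D_{p_1} ∘ C_1` with global
depolarizing noise after each layer. -/
noncomputable def depolLayered (D n : ℕ) (p : Fin n → ℝ)
    (C : Fin n → (Matrix (Fin D) (Fin D) ℂ →ₗ[ℂ] Matrix (Fin D) (Fin D) ℂ)) :
    Matrix (Fin D) (Fin D) ℂ →ₗ[ℂ] Matrix (Fin D) (Fin D) ℂ :=
  (List.finRange n).foldl (fun acc i => (depol D (p i) ∘ₗ C i) ∘ₗ acc) LinearMap.id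

set_option linter.unusedSectionVars false
set_option linter.unusedTactic false

open Matrix

namespace HSAux

section A

variable {m : Type*} [Fintype m] [DecidableEq m]

/-- Unitary conjugation of a real diagonal. -/
noncomputable def uc (U : Matrix.unitaryGroup m ℂ) (d : m → ℝ) : Matrix m m ℂ :=
  (U : Matrix m m ℂ) * Matrix.diagonal (fun i => (d i : ℂ)) * star (U : Matrix m m ℂ)

lemma diag_herm (d : m → ℝ) : (Matrix.diagonal (fun i => (d i : ℂ))).IsHermitian :=
  Matrix.isHermitian_diagonal_of_self_adjoint _ (funext fun i => by
    simp [Complex.conj_ofReal])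

lemma uc_isHermitian (U : Matrix.unitaryGroup m ℂ) (d : m → ℝ) : (uc U d).IsHermitian := by
  show (uc U d)ᴴ = uc U d
  simp [uc, Matrix.star_eq_conjTranspose, Matrix.conjTranspose_mul, (diag_herm d).eq,
    Matrix.mul_assoc]

lemma uc_posSemidef (U : Matrix.unitaryGroup m ℂ) {d : m → ℝ} (hd : ∀ i, 0 ≤ d i) :
    (uc U d).PosSemidef := by
  rw [uc, Matrix.star_eq_conjTranspose]
  exact (Matrix.PosSemidef.diagonal (fun i => by
    simpa using Complex.zero_le_real.mpr (hd i))).mul_mul_conjTranspose_same _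

lemma uc_trace (U : Matrix.unitaryGroup m ℂ) (d : m → ℝ) :
    (uc U d).trace = ((∑ i, d i : ℝ) : ℂ) := by
  rw [uc, Matrix.trace_mul_cycle, Matrix.mem_unitaryGroup_iff'.mp U.2, one_mul,
    Matrix.trace_diagonal]
  push_cast
  rfl

lemma uc_mul (U : Matrix.unitaryGroup m ℂ) (d e : m → ℝ) :
    uc U d * uc U e = uc U (fun i => d i * e i) := by
  have h1 : star (U : Matrix m m ℂ) * (U : Matrix m m ℂ) = 1 :=
    Matrix.mem_unitaryGroup_iff'.mp U.2
  simp only [uc, Matrix.mul_assoc]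
  rw [← Matrix.mul_assoc (star (U : Matrix m m ℂ)) (U : Matrix m m ℂ), h1, one_mul,
    ← Matrix.mul_assoc (Matrix.diagonal _) (Matrix.diagonal _), Matrix.diagonal_mul_diagonal]
  congr 2
  funext i
  push_cast
  rfl

lemma uc_sub (U : Matrix.unitaryGroup m ℂ) (d e : m → ℝ) :
    uc U d - uc U e = uc U (fun i => d i - e i) := by
  unfold uc
  rw [← Matrix.sub_mul, ← Matrix.mul_sub]
  congr 2
  rw [Matrix.diagonal_sub]
  congr 1
  funext i
  push_cast
  rfl

lemma uc_spectral {X : Matrix m m ℂ} (hX : X.IsHermitian) :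
    X = uc (Matrix.IsHermitian.eigenvectorUnitary hX) hX.eigenvalues := by
  unfold uc
  exact hX.spectral_theorem

lemma uc_affine (U : Matrix.unitaryGroup m ℂ) (d : m → ℝ) (a c : ℝ) :
    ((a : ℂ)) • uc U d + ((c : ℂ)) • (1 : Matrix m m ℂ) = uc U (fun i => a * d i + c) := by
  have hdiag : Matrix.diagonal (fun i : m => ((a * d i + c : ℝ) : ℂ))
      = (a : ℂ) • Matrix.diagonal (fun i => (d i : ℂ)) + (c : ℂ) • (1 : Matrix m m ℂ) := by
    rw [← Matrix.diagonal_one, ← Matrix.diagonal_smul, ← Matrix.diagonal_smul,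
      Matrix.diagonal_add]
    congr 1
    funext i
    simp only [Pi.smul_apply, smul_eq_mul, mul_one]
    push_cast
    ring
  unfold uc
  rw [hdiag, Matrix.mul_add, Matrix.add_mul, Matrix.mul_smul, Matrix.smul_mul,
    Matrix.mul_smul, Matrix.smul_mul, Matrix.mul_one, Matrix.mem_unitaryGroup_iff.mp U.2]

-- new material
lemma trace_re_nonneg {A : Matrix m m ℂ} (hA : A.PosSemidef) : 0 ≤ A.trace.re := by
  have h : ∀ i, 0 ≤ A i i := by
    intro i
    exact hA.diag_nonneg
  have : (0 : ℂ) ≤ A.trace := by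
    unfold Matrix.trace
    exact Finset.sum_nonneg fun i _ => h i
  exact (Complex.le_def.mp this).1

open scoped MatrixOrder in
lemma trace_mul_re_nonneg {A B : Matrix m m ℂ} (hA : A.PosSemidef) (hB : B.PosSemidef) :
    0 ≤ ((A * B).trace).re := by
  set S := CFC.sqrt B with hS
  have hSh : Sᴴ = S := (CFC.sqrt_nonneg B).posSemidef.1
  have hBS : B = S * S := (CFC.sqrt_mul_sqrt_self B hB.nonneg).symm
  have key : (A * B).trace = (Sᴴ * A * S).trace := by
    rw [hSh, hBS, ← Matrix.mul_assoc, Matrix.trace_mul_comm, ← Matrix.mul_assoc]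
  rw [key]
  exact trace_re_nonneg (hA.conjTranspose_mul_mul_same S)

lemma trace_mul_le_trace {P A : Matrix m m ℂ} (hP1 : (1 - P).PosSemidef) (hA : A.PosSemidef) :
    ((P * A).trace).re ≤ (A.trace).re := by
  have h := trace_mul_re_nonneg hP1 hA
  rw [Matrix.sub_mul, Matrix.one_mul, Matrix.trace_sub, Complex.sub_re] at h
  linarith

/-- variational upper bound, decomposition form -/
lemma trace_mul_uc_le {P : Matrix m m ℂ} (hP : P.PosSemidef) (hP1 : (1 - P).PosSemidef)
    (U : Matrix.unitaryGroup m ℂ) (d : m → ℝ) :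
    ((P * uc U d).trace).re ≤ ∑ i, max (d i) 0 := by
  have hdecomp : uc U d = uc U (fun i => max (d i) 0) - uc U (fun i => max (d i) 0 - d i) := by
    rw [uc_sub]; congr 1; funext i; ring
  have h1 : ((P * uc U (fun i => max (d i) 0 - d i)).trace).re ≥ 0 :=
    trace_mul_re_nonneg hP (uc_posSemidef U fun i => by simp [le_max_iff])
  have h2 : ((P * uc U (fun i => max (d i) 0)).trace).re
      ≤ ((uc U (fun i => max (d i) 0)).trace).re :=
    trace_mul_le_trace hP1 (uc_posSemidef U fun i => le_max_right _ _)
  have h3 : ((uc U (fun i => max (d i) 0)).trace).re = ∑ i, max (d i) 0 := by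
    rw [uc_trace]; simp
  rw [hdecomp, Matrix.mul_sub, Matrix.trace_sub, Complex.sub_re]
  linarith

lemma posPartTrace_herm {X : Matrix m m ℂ} (hX : X.IsHermitian) :
    posPartTrace X = ∑ i, max (hX.eigenvalues i) 0 := by
  rw [posPartTrace, dif_pos hX]

/-- variational upper bound -/
lemma trace_mul_le_posPartTrace {P X : Matrix m m ℂ} (hP : P.PosSemidef)
    (hP1 : (1 - P).PosSemidef) (hX : X.IsHermitian) :
    ((P * X).trace).re ≤ posPartTrace X := by
  rw [posPartTrace_herm hX]
  conv_lhs => rw [uc_spectral hX]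
  exact trace_mul_uc_le hP hP1 _ _

/-- attainment, decomposition form -/
lemma exists_proj_uc (U : Matrix.unitaryGroup m ℂ) (d : m → ℝ) :
    ∃ P : Matrix m m ℂ, P.PosSemidef ∧ (1 - P).PosSemidef ∧
      ((P * uc U d).trace).re = ∑ i, max (d i) 0 := by
  refine ⟨uc U (fun i => if 0 ≤ d i then 1 else 0), uc_posSemidef U fun i => by positivity, ?_, ?_⟩
  · have h1 : uc U (fun _ : m => (1 : ℝ)) = 1 := by
      simpa using (uc_affine U (fun _ => (0:ℝ)) 0 1).symm
    rw [← h1, uc_sub]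
    exact uc_posSemidef U fun i => by by_cases h : 0 ≤ d i <;> simp [h]
  · rw [uc_mul, uc_trace]
    rw [Complex.ofReal_re]
    congr 1
    funext i
    by_cases h : 0 ≤ d i
    · rw [if_pos h, one_mul, max_eq_left h]
    · rw [if_neg h, zero_mul, max_eq_right (le_of_not_ge h)]

-- new material

/-- attainment, general form -/
lemma exists_proj {X : Matrix m m ℂ} (hX : X.IsHermitian) :
    ∃ P : Matrix m m ℂ, P.PosSemidef ∧ (1 - P).PosSemidef ∧
      ((P * X).trace).re = posPartTrace X := by
  obtain ⟨P, h1, h2, h3⟩ := exists_proj_uc (Matrix.IsHermitian.eigenvectorUnitary hX)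
    hX.eigenvalues
  refine ⟨P, h1, h2, ?_⟩
  rw [posPartTrace_herm hX]
  conv_lhs => rw [uc_spectral hX]
  exact h3

lemma posPartTrace_uc (U : Matrix.unitaryGroup m ℂ) (d : m → ℝ) :
    posPartTrace (uc U d) = ∑ i, max (d i) 0 := by
  have hY := uc_isHermitian U d
  apply le_antisymm
  · obtain ⟨P, h1, h2, h3⟩ := exists_proj hY
    rw [← h3]
    exact trace_mul_uc_le h1 h2 U d
  · obtain ⟨P, h1, h2, h3⟩ := exists_proj_uc U d
    rw [← h3]
    exact trace_mul_le_posPartTrace h1 h2 hY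

lemma posPartTrace_nonneg (X : Matrix m m ℂ) : 0 ≤ posPartTrace X := by
  rw [posPartTrace]
  split
  · exact Finset.sum_nonneg fun i _ => le_max_right _ _
  · exact le_refl _

/-- data processing for positive trace-preserving maps -/
lemma posPartTrace_map_le {Φ : Matrix m m ℂ →ₗ[ℂ] Matrix m m ℂ}
    (hpos : ∀ A : Matrix m m ℂ, A.PosSemidef → (Φ A).PosSemidef)
    (htr : ∀ A : Matrix m m ℂ, (Φ A).trace = A.trace)
    {X : Matrix m m ℂ} (hX : X.IsHermitian) :
    posPartTrace (Φ X) ≤ posPartTrace X := by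
  set V := Matrix.IsHermitian.eigenvectorUnitary hX
  set lam := hX.eigenvalues with hlam
  have hXp : (uc V (fun i => max (lam i) 0)).PosSemidef :=
    uc_posSemidef V fun i => le_max_right _ _
  have hXm : (uc V (fun i => max (lam i) 0 - lam i)).PosSemidef :=
    uc_posSemidef V fun i => by simp [le_max_iff]
  have hdecomp : X = uc V (fun i => max (lam i) 0) - uc V (fun i => max (lam i) 0 - lam i) := by
    rw [uc_sub]
    conv_lhs => rw [uc_spectral hX]
    congr 1
    funext i
    ring
  have hherm : (Φ X).IsHermitian := by
    rw [hdecomp, map_sub]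
    exact ((hpos _ hXp).1).sub ((hpos _ hXm).1)
  obtain ⟨P, hP, hP1, hPt⟩ := exists_proj hherm
  rw [← hPt]
  have step1 : ((P * Φ X).trace).re ≤ ((Φ (uc V fun i => max (lam i) 0)).trace).re := by
    conv_lhs => rw [hdecomp]
    rw [map_sub, Matrix.mul_sub, Matrix.trace_sub, Complex.sub_re]
    have a1 := trace_mul_re_nonneg hP (hpos _ hXm)
    have a2 := trace_mul_le_trace hP1 (hpos _ hXp)
    linarith
  have step2 : ((Φ (uc V fun i => max (lam i) 0)).trace).re = ∑ i, max (lam i) 0 := by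
    rw [htr, uc_trace, Complex.ofReal_re]
  rw [posPartTrace_herm hX]
  calc ((P * Φ X).trace).re ≤ _ := step1
    _ = _ := step2

lemma uc_herm_sq (U : Matrix.unitaryGroup m ℂ) (d : m → ℝ) :
    (uc U d)ᴴ * uc U d = uc U (fun i => d i * d i) := by
  rw [show (uc U d)ᴴ = uc U d from uc_isHermitian U d, uc_mul]

open scoped MatrixOrder in
/-- half trace norm equals positive part trace for traceless Hermitian -/
lemma posPartTrace_eq_half_traceNorm {Z : Matrix m m ℂ} (hZ : Z.IsHermitian)
    (htr : Z.trace = 0) : posPartTrace Z = (1 / 2) * traceNorm Z := by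
  obtain ⟨V, lam, hY⟩ : ∃ (V : Matrix.unitaryGroup m ℂ) (lam : m → ℝ), Z = uc V lam :=
    ⟨_, _, uc_spectral hZ⟩
  subst hY
  have hsum : ∑ i, lam i = 0 := by
    rw [uc_trace] at htr
    exact_mod_cast htr
  set h2 := (Matrix.posSemidef_conjTranspose_mul_self (uc V lam)).isHermitian with hh2
  set W := Matrix.IsHermitian.eigenvectorUnitary h2 with hW
  set mu := h2.eigenvalues with hmu
  have habs : uc V (fun i => |lam i|)
      = CFC.sqrt ((uc V lam)ᴴ * uc V lam) := by
    rw [eq_comm, CFC.sqrt_eq_iff _ _ (Matrix.posSemidef_conjTranspose_mul_self _).nonneg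
      (uc_posSemidef V fun i => abs_nonneg _).nonneg]
    rw [uc_mul, uc_herm_sq]
    have hfun : (fun i => |lam i| * |lam i|) = fun i => lam i * lam i :=
      funext fun i => abs_mul_abs_self (lam i)
    rw [hfun]
  have hsqrt2 : uc W (fun i => Real.sqrt (mu i))
      = CFC.sqrt ((uc V lam)ᴴ * uc V lam) := by
    rw [eq_comm, CFC.sqrt_eq_iff _ _ (Matrix.posSemidef_conjTranspose_mul_self _).nonneg
      (uc_posSemidef W fun i => Real.sqrt_nonneg _).nonneg]
    rw [uc_mul]
    have hfun : (fun i => Real.sqrt (mu i) * Real.sqrt (mu i)) = mu := funext fun i =>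
      Real.mul_self_sqrt ((Matrix.posSemidef_conjTranspose_mul_self (uc V lam)).eigenvalues_nonneg i)
    rw [hfun]
    exact (uc_spectral h2).symm
  have htraces : ∑ i, |lam i| = ∑ i, Real.sqrt (mu i) := by
    have h3 := congrArg Matrix.trace (habs.trans hsqrt2.symm)
    rw [uc_trace, uc_trace] at h3
    exact_mod_cast h3
  have hTN : traceNorm (uc V lam) = ∑ i, |lam i| := htraces.symm
  rw [posPartTrace_uc, hTN]
  have hmax : ∀ i, max (lam i) 0 = (|lam i| + lam i) / 2 := by
    intro i
    rcases le_total (lam i) 0 with h | h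
    · rw [max_eq_right h, abs_of_nonpos h]; ring
    · rw [max_eq_left h, abs_of_nonneg h]; ring
  rw [Finset.sum_congr rfl fun i _ => hmax i]
  have hsplit : ∑ i, (|lam i| + lam i) / 2 = ((∑ i, |lam i|) + ∑ i, lam i) / 2 := by
    rw [← Finset.sum_add_distrib, Finset.sum_div]
  rw [hsplit, hsum]
  ring

lemma sum_max_affine_le (a c : ℝ) (ha : 0 ≤ a) (hc : c ≤ 0) (lam : m → ℝ) :
    ∑ i, max (a * lam i + c) 0 ≤ max 0 (a * ∑ i, max (lam i) 0 + c) := by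
  by_cases hS : ∀ i, a * lam i + c ≤ 0
  · have h0 : ∀ i ∈ Finset.univ, max (a * lam i + c) 0 = 0 :=
      fun i _ => max_eq_right (hS i)
    rw [Finset.sum_congr rfl h0, Finset.sum_const, smul_zero]
    exact le_max_left _ _
  · push_neg at hS
    obtain ⟨i₀, hi₀⟩ := hS
    have key : ∀ i ∈ Finset.univ,
        max (a * lam i + c) 0 ≤ a * max (lam i) 0 + (if i = i₀ then c else 0) := by
      intro i _
      by_cases h : i = i₀
      · subst h
        rw [if_pos rfl, max_eq_left (le_of_lt hi₀)]
        have := mul_le_mul_of_nonneg_left (le_max_left (lam i) 0) ha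
        linarith
      · rw [if_neg h, add_zero]
        apply max_le
        · have := mul_le_mul_of_nonneg_left (le_max_left (lam i) 0) ha
          linarith
        · exact mul_nonneg ha (le_max_right _ _)
    calc ∑ i, max (a * lam i + c) 0
        ≤ ∑ i, (a * max (lam i) 0 + (if i = i₀ then c else 0)) := Finset.sum_le_sum key
      _ = a * ∑ i, max (lam i) 0 + c := by
          rw [Finset.sum_add_distrib, ← Finset.mul_sum, Finset.sum_ite_eq' Finset.univ i₀]
          simp
      _ ≤ max 0 (a * ∑ i, max (lam i) 0 + c) := le_max_right _ _

lemma step_bound {Dr γ q Pp κ h : ℝ} (hD : 0 < Dr) (hγ : 1 ≤ γ) (hq0 : 0 ≤ q) (hq1 : q ≤ 1)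
    (hh0 : 0 ≤ h) (hhB : h ≤ max 0 ((1 - γ) * (1 - Pp) / Dr + Pp * κ)) :
    max 0 ((1 - q) * h + q * (1 - γ) / Dr)
      ≤ max 0 ((1 - γ) * (1 - (1 - q) * Pp) / Dr + ((1 - q) * Pp) * κ) := by
  have hc : q * (1 - γ) / Dr ≤ 0 :=
    div_nonpos_of_nonpos_of_nonneg (mul_nonpos_of_nonneg_of_nonpos hq0 (by linarith)) hD.le
  apply max_le (le_max_left _ _)
  rcases le_or_gt ((1 - γ) * (1 - Pp) / Dr + Pp * κ) 0 with hB | hB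
  · have hh : h = 0 := le_antisymm (by rwa [max_eq_left hB] at hhB) hh0
    refine le_trans ?_ (le_max_left _ _)
    rw [hh]
    linarith
  · rw [max_eq_right hB.le] at hhB
    refine le_trans ?_ (le_max_right _ _)
    have key : (1 - q) * ((1 - γ) * (1 - Pp) / Dr + Pp * κ) + q * (1 - γ) / Dr
        = (1 - γ) * (1 - (1 - q) * Pp) / Dr + ((1 - q) * Pp) * κ := by
      field_simp
      ring
    have h2 := mul_le_mul_of_nonneg_left hhB (by linarith : (0:ℝ) ≤ 1 - q)
    linarith

lemma smul_real_isHermitian {σ : Matrix m m ℂ} (hσ : σ.IsHermitian) (γ : ℝ) :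
    (((γ : ℂ)) • σ).IsHermitian := by
  show (((γ : ℂ)) • σ)ᴴ = ((γ : ℂ)) • σ
  rw [Matrix.conjTranspose_smul, hσ.eq]
  congr 1
  simp [Complex.conj_ofReal]

lemma hsDivAux_le_half_traceNorm {γ : ℝ} (hγ : 1 ≤ γ) {ρ σ : Matrix m m ℂ}
    (hρ : ρ.PosSemidef) (hσ : σ.PosSemidef) (hρt : ρ.trace = 1) (hσt : σ.trace = 1) :
    posPartTrace (ρ - (γ : ℂ) • σ) ≤ (1 / 2) * traceNorm (ρ - σ) := by
  have hX : (ρ - (γ : ℂ) • σ).IsHermitian := hρ.1.sub (smul_real_isHermitian hσ.1 γ)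
  have hZ : (ρ - σ).IsHermitian := hρ.1.sub hσ.1
  obtain ⟨P, hP, hP1, hPt⟩ := exists_proj hX
  rw [← hPt]
  have hXZ : ρ - (γ : ℂ) • σ = (ρ - σ) - (((γ - 1 : ℝ) : ℂ)) • σ := by
    push_cast
    rw [sub_smul, one_smul]
    abel
  have expand : ((P * (ρ - (γ : ℂ) • σ)).trace).re
      = ((P * (ρ - σ)).trace).re - (γ - 1) * ((P * σ).trace).re := by
    rw [hXZ, Matrix.mul_sub, Matrix.trace_sub, Complex.sub_re, Matrix.mul_smul,
      Matrix.trace_smul]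
    congr 1
    rw [smul_eq_mul, Complex.re_ofReal_mul]
  have h1 : ((P * (ρ - σ)).trace).re ≤ posPartTrace (ρ - σ) :=
    trace_mul_le_posPartTrace hP hP1 hZ
  have h2 : 0 ≤ ((P * σ).trace).re := trace_mul_re_nonneg hP hσ
  have h3 : posPartTrace (ρ - σ) = (1 / 2) * traceNorm (ρ - σ) :=
    posPartTrace_eq_half_traceNorm hZ (by rw [Matrix.trace_sub, hρt, hσt, sub_self])
  have h4 : 0 ≤ (γ - 1) * ((P * σ).trace).re := mul_nonneg (by linarith) h2
  rw [expand]
  linarith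

end A

section B

variable {n m : Type*} [Fintype n] [DecidableEq n] [Fintype m] [DecidableEq m]

lemma smul_posSemidef {A : Matrix m m ℂ} (r : ℝ) (hr : 0 ≤ r) (hA : A.PosSemidef) :
    ((r : ℂ) • A).PosSemidef := by
  exact hA.smul (Complex.zero_le_real.mpr hr)

lemma cptp_posSemidef {Φ : Matrix n n ℂ →ₗ[ℂ] Matrix m m ℂ} (hΦ : IsCPTP Φ)
    {A : Matrix n n ℂ} (hA : A.PosSemidef) : (Φ A).PosSemidef := by
  set X : Matrix (Fin 1 × n) (Fin 1 × n) ℂ := Matrix.of fun p q => A p.2 q.2 with hX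
  have hXpsd : X.PosSemidef := by
    refine .of_dotProduct_mulVec_nonneg ?_ ?_
    · show Xᴴ = X
      ext p q
      simp only [hX, Matrix.conjTranspose_apply, Matrix.of_apply]
      exact hA.1.apply p.2 q.2
    · intro v
      have h := hA.dotProduct_mulVec_nonneg (fun j => v (0, j))
      convert h using 1
      simp only [dotProduct, Matrix.mulVec, hX, Matrix.of_apply,
        Fintype.sum_prod_type, Fin.sum_univ_one, Pi.star_apply]
  have hY := hΦ.1 1 X hXpsd
  have hYeq : (Matrix.of fun p q : Fin 1 × m =>
      Φ (Matrix.of fun i j => X (p.1, i) (q.1, j)) p.2 q.2)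
      = Matrix.of fun p q : Fin 1 × m => Φ A p.2 q.2 := rfl
  rw [hYeq] at hY
  refine .of_dotProduct_mulVec_nonneg ?_ ?_
  · show (Φ A)ᴴ = Φ A
    ext i j
    have := congrFun (congrFun hY.1 ((0 : Fin 1), i)) ((0 : Fin 1), j)
    simpa [Matrix.conjTranspose_apply] using this
  · intro v
    have h := hY.dotProduct_mulVec_nonneg (fun p : Fin 1 × m => v p.2)
    convert h using 1
    simp only [dotProduct, Matrix.mulVec, Matrix.of_apply,
      Fintype.sum_prod_type, Fin.sum_univ_one, Pi.star_apply]

end B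

section DepolLemmas

variable {D : ℕ}

lemma depol_apply (q : ℝ) (ρ : Matrix (Fin D) (Fin D) ℂ) :
    depol D q ρ
      = (1 - (q : ℂ)) • ρ + (((q : ℂ) / D) * ρ.trace) • (1 : Matrix (Fin D) (Fin D) ℂ) :=
  rfl

lemma depol_trace (q : ℝ) (hD : D ≠ 0) (ρ : Matrix (Fin D) (Fin D) ℂ) :
    (depol D q ρ).trace = ρ.trace := by
  have hDc : (D : ℂ) ≠ 0 := Nat.cast_ne_zero.mpr hD
  rw [depol_apply, Matrix.trace_add, Matrix.trace_smul, Matrix.trace_smul, Matrix.trace_one]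
  simp only [Fintype.card_fin, smul_eq_mul]
  field_simp
  ring

lemma depol_posSemidef (q : ℝ) (hq0 : 0 ≤ q) (hq1 : q ≤ 1)
    {ρ : Matrix (Fin D) (Fin D) ℂ} (hρ : IsDensity ρ) : (depol D q ρ).PosSemidef := by
  rw [depol_apply, hρ.2, mul_one]
  have h1 : (1 - (q : ℂ)) = ((1 - q : ℝ) : ℂ) := by push_cast; ring
  have h2 : ((q : ℂ) / D) = ((q / D : ℝ) : ℂ) := by push_cast; ring
  rw [h1, h2]
  exact (smul_posSemidef _ (by linarith) hρ.1).add
    (smul_posSemidef _ (by positivity) Matrix.PosSemidef.one)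

lemma depol_diff (q γ : ℝ) {ρ σ : Matrix (Fin D) (Fin D) ℂ}
    (hρt : ρ.trace = 1) (hσt : σ.trace = 1) :
    depol D q ρ - (γ : ℂ) • depol D q σ
      = ((1 - q : ℝ) : ℂ) • (ρ - (γ : ℂ) • σ) + ((q * (1 - γ) / D : ℝ) : ℂ) • 1 := by
  rw [depol_apply, depol_apply, hρt, hσt]
  push_cast
  module

lemma hsDiv_depol_le {γ q : ℝ} (hγ : 1 ≤ γ) (hq0 : 0 ≤ q) (hq1 : q ≤ 1) (hD : D ≠ 0)
    {ρ σ : Matrix (Fin D) (Fin D) ℂ} (hρ : IsDensity ρ) (hσ : IsDensity σ) :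
    hsDiv γ (depol D q ρ) (depol D q σ)
      ≤ max 0 ((1 - q) * hsDiv γ ρ σ + q * (1 - γ) / D) := by
  have hDpos : (0 : ℝ) < (D : ℝ) := by exact_mod_cast Nat.pos_of_ne_zero hD
  have hX : (ρ - (γ : ℂ) • σ).IsHermitian := hρ.1.1.sub (smul_real_isHermitian hσ.1.1 γ)
  obtain ⟨V, lam, hXdec⟩ :
      ∃ (V : Matrix.unitaryGroup (Fin D) ℂ) (lam : Fin D → ℝ), ρ - (γ : ℂ) • σ = uc V lam :=
    ⟨_, _, uc_spectral hX⟩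
  have key : depol D q ρ - (γ : ℂ) • depol D q σ
      = uc V (fun i => (1 - q) * lam i + q * (1 - γ) / D) := by
    rw [depol_diff q γ hρ.2 hσ.2, hXdec, uc_affine]
  rw [hsDiv, hsDiv, key, hXdec, posPartTrace_uc, posPartTrace_uc]
  exact sum_max_affine_le (1 - q) _ (by linarith)
    (div_nonpos_of_nonpos_of_nonneg (mul_nonpos_of_nonneg_of_nonpos hq0 (by linarith)) hDpos.le)
    lam

lemma hsDiv_cptp_le {γ : ℝ}
    {Φ : Matrix (Fin D) (Fin D) ℂ →ₗ[ℂ] Matrix (Fin D) (Fin D) ℂ} (hΦ : IsCPTP Φ)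
    {ρ σ : Matrix (Fin D) (Fin D) ℂ} (hρ : ρ.PosSemidef) (hσ : σ.PosSemidef) :
    hsDiv γ (Φ ρ) (Φ σ) ≤ hsDiv γ ρ σ := by
  have hX : (ρ - (γ : ℂ) • σ).IsHermitian := hρ.1.sub (smul_real_isHermitian hσ.1 γ)
  have heq : Φ ρ - (γ : ℂ) • Φ σ = Φ (ρ - (γ : ℂ) • σ) := by rw [map_sub, _root_.map_smul]
  rw [hsDiv, hsDiv, heq]
  exact posPartTrace_map_le (fun A hA => cptp_posSemidef hΦ hA) hΦ.2 hX

end DepolLemmas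

end HSAux

/-- Differential privacy of layered circuits with global depolarizing noise. -/

theorem hsDiv_depolLayered (D n : ℕ) (p : Fin n → ℝ)
    (hp : ∀ i, 0 ≤ p i ∧ p i ≤ 1)
    (C : Fin n → (Matrix (Fin D) (Fin D) ℂ →ₗ[ℂ] Matrix (Fin D) (Fin D) ℂ))
    (hC : ∀ i, IsCPTP (C i))
    (ε κ : ℝ) (hε : 0 ≤ ε) (hκ : 0 ≤ κ)
    (ρ σ : Matrix (Fin D) (Fin D) ℂ) (hρ : IsDensity ρ) (hσ : IsDensity σ)
    (hclose : (1 / 2) * traceNorm (ρ - σ) ≤ κ) :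
    hsDiv (Real.exp ε) (depolLayered D n p C ρ) (depolLayered D n p C σ) ≤
      max 0 ((1 - Real.exp ε) * (1 - ∏ i, (1 - p i)) / D
        + (∏ i, (1 - p i)) * κ) := by
  classical
  have hD : D ≠ 0 := by
    rintro rfl
    simpa [Matrix.trace] using hρ.2
  have hDpos : (0 : ℝ) < (D : ℝ) := by exact_mod_cast Nat.pos_of_ne_zero hD
  set γ := Real.exp ε with hγdef
  have hγ : 1 ≤ γ := by
    rw [hγdef, ← Real.exp_zero]
    exact Real.exp_le_exp.mpr hε
  set F : List (Fin n) → (Matrix (Fin D) (Fin D) ℂ →ₗ[ℂ] Matrix (Fin D) (Fin D) ℂ) :=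
    fun l => l.foldl (fun acc i => (depol D (p i) ∘ₗ C i) ∘ₗ acc) LinearMap.id with hF
  have main : ∀ l : List (Fin n), IsDensity (F l ρ) ∧ IsDensity (F l σ) ∧
      hsDiv γ (F l ρ) (F l σ)
        ≤ max 0 ((1 - γ) * (1 - (l.map fun i => 1 - p i).prod) / D
            + (l.map fun i => 1 - p i).prod * κ) := by
    intro l
    induction l using List.reverseRecOn with
    | nil =>
      have hid : ∀ τ : Matrix (Fin D) (Fin D) ℂ, F [] τ = τ := fun τ => by
        simp [hF]
      refine ⟨by rw [hid]; exact hρ, by rw [hid]; exact hσ, ?_⟩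
      rw [hid, hid]
      simp only [List.map_nil, List.prod_nil]
      have hb := HSAux.hsDivAux_le_half_traceNorm hγ hρ.1 hσ.1 hρ.2 hσ.2
      have hexpr : (1 - γ) * (1 - 1) / (D : ℝ) + 1 * κ = κ := by ring
      rw [hexpr]
      calc hsDiv γ ρ σ ≤ (1 / 2) * traceNorm (ρ - σ) := hb
        _ ≤ κ := hclose
        _ ≤ max 0 κ := le_max_right _ _
    | append_singleton l i ih =>
      obtain ⟨hρl, hσl, hbound⟩ := ih
      have hFl : ∀ τ : Matrix (Fin D) (Fin D) ℂ,
          F (l ++ [i]) τ = depol D (p i) (C i (F l τ)) := fun τ => by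
        simp [hF, List.foldl_append]
      have hρc : IsDensity (C i (F l ρ)) :=
        ⟨HSAux.cptp_posSemidef (hC i) hρl.1, ((hC i).2 _).trans hρl.2⟩
      have hσc : IsDensity (C i (F l σ)) :=
        ⟨HSAux.cptp_posSemidef (hC i) hσl.1, ((hC i).2 _).trans hσl.2⟩
      refine ⟨?_, ?_, ?_⟩
      · rw [hFl]
        exact ⟨HSAux.depol_posSemidef _ (hp i).1 (hp i).2 hρc,
          (HSAux.depol_trace _ hD _).trans hρc.2⟩
      · rw [hFl]
        exact ⟨HSAux.depol_posSemidef _ (hp i).1 (hp i).2 hσc,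
          (HSAux.depol_trace _ hD _).trans hσc.2⟩
      · rw [hFl, hFl]
        have s1 : hsDiv γ (C i (F l ρ)) (C i (F l σ)) ≤ hsDiv γ (F l ρ) (F l σ) :=
          HSAux.hsDiv_cptp_le (hC i) hρl.1 hσl.1
        have s2 := HSAux.hsDiv_depol_le hγ (hp i).1 (hp i).2 hD hρc hσc
        have s0 : 0 ≤ hsDiv γ (C i (F l ρ)) (C i (F l σ)) := HSAux.posPartTrace_nonneg _
        have s3 := HSAux.step_bound (q := p i) (κ := κ) hDpos hγ (hp i).1 (hp i).2 s0
          (le_trans s1 hbound)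
        have hPl : ((l ++ [i]).map fun j => 1 - p j).prod
            = (1 - p i) * (l.map fun j => 1 - p j).prod := by
          rw [List.map_append, List.prod_append]
          simp [mul_comm]
        rw [hPl]
        exact le_trans s2 s3
  have hprod : ∏ i, (1 - p i) = ((List.finRange n).map fun i => 1 - p i).prod :=
    Fin.prod_univ_def _
  have hdl : ∀ τ : Matrix (Fin D) (Fin D) ℂ, depolLayered D n p C τ = F (List.finRange n) τ :=
    fun τ => rfl
  rw [hprod, hdl, hdl]
  exact (main (List.finRange n)).2.2
end

section
/- Local differential privacy implies trace-distance contraction: let ε ≥ 0, 0 ≤ δ ≤ 1, and let A be a quantum channel on a finite-dimensional system such that E_{e^ε}(A(ρ)‖A(σ)) ≤ δ for ALL pairs of density operators ρ, σ (i.e., A is (ε,δ)-locally differentially private). Then η₁(A) ≤ 1 − e^{−ε}(1 − δ); equivalently, for all density operators ρ, σ, (1/2)‖A(ρ) − A(σ)‖₁ ≤ (1 − e^{−ε}(1−δ)) · (1/2)‖ρ − σ‖₁. -/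
open scoped BigOperators ComplexOrder

set_option linter.unusedSectionVars false

namespace LdpAux

open Matrix

variable {n : Type*} [Fintype n] [DecidableEq n]

/-- Functional calculus of a Hermitian matrix. -/
noncomputable def herm {X : Matrix n n ℂ} (h : X.IsHermitian) (f : ℝ → ℝ) : Matrix n n ℂ :=
  (h.eigenvectorUnitary : Matrix n n ℂ) *
    diagonal (fun i => (f (h.eigenvalues i) : ℂ)) *
    star (h.eigenvectorUnitary : Matrix n n ℂ)

variable {X : Matrix n n ℂ} (h : X.IsHermitian)

lemma U_mul_star : (h.eigenvectorUnitary : Matrix n n ℂ) *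
    star (h.eigenvectorUnitary : Matrix n n ℂ) = 1 :=
  Matrix.mem_unitaryGroup_iff.mp h.eigenvectorUnitary.2

lemma star_mul_U : star (h.eigenvectorUnitary : Matrix n n ℂ) *
    (h.eigenvectorUnitary : Matrix n n ℂ) = 1 :=
  Matrix.mem_unitaryGroup_iff'.mp h.eigenvectorUnitary.2

lemma herm_id : herm h id = X := by
  have := h.spectral_theorem
  simpa [herm, Function.comp_def] using this.symm

lemma herm_sub (f g : ℝ → ℝ) : herm h f - herm h g = herm h (fun x => f x - g x) := by
  unfold herm
  rw [← sub_mul, ← mul_sub, diagonal_sub]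
  push_cast
  ring_nf

lemma herm_congr (f g : ℝ → ℝ) (hfg : ∀ x, f x = g x) : herm h f = herm h g := by
  have h2 : (fun i => (f (h.eigenvalues i) : ℂ)) = fun i => (g (h.eigenvalues i) : ℂ) := by
    funext i; rw [hfg]
  unfold herm; rw [h2]

lemma herm_posSemidef (f : ℝ → ℝ) (hf : ∀ x, 0 ≤ f x) : (herm h f).PosSemidef := by
  apply Matrix.PosSemidef.mul_mul_conjTranspose_same
  exact Matrix.posSemidef_diagonal_iff.mpr fun i => Complex.zero_le_real.mpr (hf _)

lemma herm_trace (f : ℝ → ℝ) : (herm h f).trace = ∑ i, (f (h.eigenvalues i) : ℂ) := by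
  unfold herm
  rw [Matrix.trace_mul_cycle]; rw [star_mul_U h, one_mul, trace_diagonal]

lemma trace_eq_sum_eig : X.trace = ∑ i, (h.eigenvalues i : ℂ) := by
  conv_lhs => rw [← herm_id h]
  simpa using herm_trace h id

lemma diag_nonneg {M : Matrix n n ℂ} (hM : M.PosSemidef) (i : n) : 0 ≤ M i i := by
  exact hM.diag_nonneg

lemma diag_re_nonneg {M : Matrix n n ℂ} (hM : M.PosSemidef) (i : n) : 0 ≤ (M i i).re :=
  (Complex.le_def.mp (diag_nonneg hM i)).1

lemma psd_trace_zero {M : Matrix n n ℂ} (hM : M.PosSemidef) (ht : M.trace = 0) : M = 0 := by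
  have h1 : ∑ i, (hM.1.eigenvalues i : ℂ) = 0 := by rw [← trace_eq_sum_eig hM.1, ht]
  have h2 : ∑ i, hM.1.eigenvalues i = 0 := by
    have := congrArg Complex.re h1
    simpa [Complex.re_sum] using this
  have h3 : ∀ i ∈ Finset.univ, hM.1.eigenvalues i = 0 :=
    (Finset.sum_eq_zero_iff_of_nonneg (fun i _ => hM.eigenvalues_nonneg i)).mp h2
  have h4 : diagonal (RCLike.ofReal ∘ hM.1.eigenvalues : n → ℂ) = 0 := by
    ext i j
    rcases eq_or_ne i j with rfl | hij
    · simp [diagonal, h3 i (Finset.mem_univ i)]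
    · simp [diagonal, hij]
  calc M = _ := hM.1.spectral_theorem
  _ = 0 := by rw [h4]; simp

lemma exists_coeffs {Q : Matrix n n ℂ}
    (hQ : Q.PosSemidef) (hQ1 : ((1 : Matrix n n ℂ) - Q).PosSemidef) :
    ∃ c : n → ℝ, (∀ i, 0 ≤ c i ∧ c i ≤ 1) ∧
      (Q * X).trace.re = ∑ i, c i * h.eigenvalues i := by
  have hBpsd : ((star (h.eigenvectorUnitary : Matrix n n ℂ)) * Q *
      (h.eigenvectorUnitary : Matrix n n ℂ)).PosSemidef := by
    simpa [Matrix.star_eq_conjTranspose] using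
      hQ.conjTranspose_mul_mul_same (h.eigenvectorUnitary : Matrix n n ℂ)
  set U : Matrix n n ℂ := (h.eigenvectorUnitary : Matrix n n ℂ) with hU
  set B : Matrix n n ℂ := star U * Q * U with hB
  have hB1 : ((1 : Matrix n n ℂ) - B).PosSemidef := by
    have h2 : star U * (1 - Q) * U = 1 - B := by
      rw [Matrix.mul_sub, Matrix.sub_mul, Matrix.mul_one, star_mul_U h, hB]
    have := hQ1.conjTranspose_mul_mul_same U
    rw [← Matrix.star_eq_conjTranspose, h2] at this
    exact this
  have e : (Q * X).trace = (B * diagonal (RCLike.ofReal ∘ h.eigenvalues)).trace := by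
    conv_lhs => rw [h.spectral_theorem, Unitary.conjStarAlgAut_apply]
    rw [show Q * (U * diagonal (RCLike.ofReal ∘ h.eigenvalues) * star U)
        = Q * (U * diagonal (RCLike.ofReal ∘ h.eigenvalues)) * star U by
      rw [← Matrix.mul_assoc],
      Matrix.trace_mul_cycle, ← Matrix.mul_assoc, ← hB]
  refine ⟨fun i => (B i i).re, fun i => ⟨diag_re_nonneg hBpsd i, ?_⟩, ?_⟩
  · have h3 := diag_re_nonneg hB1 i
    simp only [Matrix.sub_apply, Matrix.one_apply_eq, Complex.sub_re, Complex.one_re] at h3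
    linarith
  · rw [e]
    have h4 : (B * diagonal (RCLike.ofReal ∘ h.eigenvalues)).trace
        = ∑ i, B i i * (h.eigenvalues i : ℂ) := by
      simp [Matrix.trace, Matrix.diag, Matrix.mul_diagonal, RCLike.ofReal]
    rw [h4, Complex.re_sum]
    exact Finset.sum_congr rfl fun i _ => by simp [Complex.mul_re]


lemma trace_herm_mul (f : ℝ → ℝ) :
    (herm h f * X).trace = ∑ i, (f (h.eigenvalues i) : ℂ) * (h.eigenvalues i : ℂ) := by
  unfold herm
  rw [Matrix.trace_mul_cycle, Matrix.trace_mul_cycle, ← Matrix.mul_assoc,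
    (show star (h.eigenvectorUnitary : Matrix n n ℂ) * X * (h.eigenvectorUnitary : Matrix n n ℂ)
      = diagonal (RCLike.ofReal ∘ h.eigenvalues) by
        simpa using h.conjStarAlgAut_star_eigenvectorUnitary), diagonal_mul_diagonal, trace_diagonal]
  exact Finset.sum_congr rfl fun i _ => by simp [mul_comm]

lemma posPartTrace_of_herm : posPartTrace X = ∑ i, max (h.eigenvalues i) 0 := by
  rw [posPartTrace, dif_pos h]

include h in
lemma posPartTrace_le {Q : Matrix n n ℂ}
    (hQ : Q.PosSemidef) (hQ1 : ((1 : Matrix n n ℂ) - Q).PosSemidef) :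
    (Q * X).trace.re ≤ posPartTrace X := by
  obtain ⟨c, hc, hce⟩ := exists_coeffs h hQ hQ1
  rw [hce, posPartTrace_of_herm h]
  refine Finset.sum_le_sum fun i _ => ?_
  rcases le_total 0 (h.eigenvalues i) with hx | hx
  · calc c i * h.eigenvalues i ≤ 1 * h.eigenvalues i :=
        mul_le_mul_of_nonneg_right (hc i).2 hx
    _ = h.eigenvalues i := one_mul _
    _ ≤ max (h.eigenvalues i) 0 := le_max_left _ _
  · calc c i * h.eigenvalues i ≤ 0 := mul_nonpos_of_nonneg_of_nonpos (hc i).1 hx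
    _ ≤ max (h.eigenvalues i) 0 := le_max_right _ _

lemma attain (f : ℝ → ℝ) (hf0 : ∀ x, 0 ≤ f x) (hf1 : ∀ x, f x ≤ 1) :
    ∃ Q : Matrix n n ℂ, Q.PosSemidef ∧ ((1 : Matrix n n ℂ) - Q).PosSemidef ∧
      (Q * X).trace.re = ∑ i, f (h.eigenvalues i) * h.eigenvalues i := by
  refine ⟨herm h f, herm_posSemidef h f hf0, ?_, ?_⟩
  · have h1 : herm h (fun _ => 1) = 1 := by
      unfold herm
      rw [show diagonal (fun i => ((1 : ℝ) : ℂ)) = (1 : Matrix n n ℂ) by simp,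
        Matrix.mul_one, U_mul_star h]
    rw [← h1, herm_sub]
    exact herm_posSemidef h _ fun x => by linarith [hf1 x]
  · rw [trace_herm_mul h f, Complex.re_sum]
    exact Finset.sum_congr rfl fun i _ => by
      rw [← Complex.ofReal_mul, Complex.ofReal_re]

include h in
lemma posPartTrace_attained :
    ∃ Q : Matrix n n ℂ, Q.PosSemidef ∧ ((1 : Matrix n n ℂ) - Q).PosSemidef ∧
      (Q * X).trace.re = posPartTrace X := by
  obtain ⟨Q, hQ, hQ1, he⟩ := attain h (fun x => if 0 < x then 1 else 0)
    (fun x => by split <;> norm_num) (fun x => by split <;> norm_num)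
  refine ⟨Q, hQ, hQ1, ?_⟩
  rw [he, posPartTrace_of_herm h]
  refine Finset.sum_congr rfl fun i _ => ?_
  rcases lt_or_ge 0 (h.eigenvalues i) with hx | hx
  · rw [if_pos hx, one_mul, max_eq_left hx.le]
  · rw [if_neg (not_lt.mpr hx), zero_mul, max_eq_right hx]

lemma max_neg_eq (x : ℝ) : max (-x) 0 = max x 0 - x := by
  rcases le_total 0 x with hx | hx
  · rw [max_eq_right (neg_nonpos.mpr hx), max_eq_left hx]; ring
  · rw [max_eq_left (neg_nonneg.mpr hx), max_eq_right hx]; ring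

include h in
lemma posPartTrace_neg : posPartTrace (-X) = posPartTrace X - X.trace.re := by
  have hsum : ∑ i, max (-(h.eigenvalues i)) 0 = posPartTrace X - X.trace.re := by
    rw [posPartTrace_of_herm h, trace_eq_sum_eig h]
    rw [show (∑ i, ((h.eigenvalues i : ℂ))).re = ∑ i, h.eigenvalues i by
      rw [Complex.re_sum]; exact Finset.sum_congr rfl fun i _ => Complex.ofReal_re _]
    rw [← Finset.sum_sub_distrib]
    exact Finset.sum_congr rfl fun i _ => max_neg_eq _
  apply le_antisymm
  · obtain ⟨Q, hQ, hQ1, he⟩ := posPartTrace_attained h.neg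
    obtain ⟨c, hc, hce⟩ := exists_coeffs h hQ hQ1
    rw [← he, ← hsum]
    rw [Matrix.mul_neg, Matrix.trace_neg, Complex.neg_re, hce, ← Finset.sum_neg_distrib]
    refine Finset.sum_le_sum fun i _ => ?_
    have h1 := (hc i).1
    have h2 := (hc i).2
    rcases le_total 0 (h.eigenvalues i) with hx | hx
    · have hb : -(c i * h.eigenvalues i) ≤ 0 := by nlinarith
      exact hb.trans (le_max_right _ _)
    · have hb : -(c i * h.eigenvalues i) ≤ -h.eigenvalues i := by nlinarith
      exact hb.trans (le_max_left _ _)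
  · obtain ⟨Q, hQ, hQ1, he⟩ := attain h (fun x => if x < 0 then 1 else 0)
      (fun x => by split <;> norm_num)
      (fun x => by split <;> norm_num)
    have h2 : (Q * -X).trace.re = ∑ i, max (-(h.eigenvalues i)) 0 := by
      rw [Matrix.mul_neg, Matrix.trace_neg, Complex.neg_re, he, ← Finset.sum_neg_distrib]
      refine Finset.sum_congr rfl fun i _ => ?_
      rcases lt_or_ge (h.eigenvalues i) 0 with hx | hx
      · rw [if_pos hx, one_mul, max_eq_left (neg_nonneg.mpr hx.le)]
      · rw [if_neg (not_lt.mpr hx), zero_mul, max_eq_right (neg_nonpos.mpr hx), neg_zero]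
    rw [← hsum, ← h2]
    exact posPartTrace_le h.neg hQ hQ1

include h in
lemma isHermitian_real_smul (c : ℝ) : ((c : ℂ) • X).IsHermitian := by
  unfold Matrix.IsHermitian
  rw [Matrix.conjTranspose_smul, h.eq, Complex.star_def, Complex.conj_ofReal]

include h in
lemma posPartTrace_smul {c : ℝ} (hc : 0 ≤ c) :
    posPartTrace ((c : ℂ) • X) = c * posPartTrace X := by
  have hcX : ((c : ℂ) • X).IsHermitian := isHermitian_real_smul h c
  have key : ∀ Q : Matrix n n ℂ, (Q * ((c : ℂ) • X)).trace.re = c * (Q * X).trace.re := by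
    intro Q
    rw [Matrix.mul_smul, Matrix.trace_smul]
    simp [Complex.real_smul, Complex.mul_re]
  apply le_antisymm
  · obtain ⟨Q, hQ, hQ1, he⟩ := posPartTrace_attained hcX
    rw [← he, key Q]
    exact mul_le_mul_of_nonneg_left (posPartTrace_le h hQ hQ1) hc
  · obtain ⟨Q, hQ, hQ1, he⟩ := posPartTrace_attained h
    rw [← he, ← key Q]
    exact posPartTrace_le hcX hQ hQ1

lemma posPartTrace_nonneg (Y : Matrix n n ℂ) : 0 ≤ posPartTrace Y := by
  unfold posPartTrace
  split
  · exact Finset.sum_nonneg fun i _ => le_max_right _ _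
  · exact le_refl 0
  
end LdpAux


namespace LdpAux

open Matrix

variable {n : Type*} [Fintype n] [DecidableEq n]
variable {X : Matrix n n ℂ} (h : X.IsHermitian)

lemma herm_mul (f g : ℝ → ℝ) : herm h f * herm h g = herm h (fun x => f x * g x) := by
  unfold herm
  rw [mul_assoc, mul_assoc, ← mul_assoc (star _) _, ← mul_assoc (star _), star_mul_U h, one_mul,
    ← mul_assoc, ← mul_assoc, mul_assoc _ _ (diagonal _), diagonal_mul_diagonal]
  push_cast
  ring_nf

include h in
lemma sum_maxneg : ∑ i, max (-(h.eigenvalues i)) 0 = posPartTrace X - X.trace.re := by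
  rw [posPartTrace_of_herm h, trace_eq_sum_eig h]
  rw [show (∑ i, ((h.eigenvalues i : ℂ))).re = ∑ i, h.eigenvalues i by
    rw [Complex.re_sum]; exact Finset.sum_congr rfl fun i _ => Complex.ofReal_re _]
  rw [← Finset.sum_sub_distrib]
  exact Finset.sum_congr rfl fun i _ => max_neg_eq _

include h in
lemma herm_decomp : ∃ R S : Matrix n n ℂ, R.PosSemidef ∧ S.PosSemidef ∧ X = R - S ∧
    R.trace = ((posPartTrace X : ℝ) : ℂ) ∧
    S.trace = ((posPartTrace X - X.trace.re : ℝ) : ℂ) := by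
  refine ⟨herm h (fun x => max x 0), herm h (fun x => max (-x) 0),
    herm_posSemidef h _ (fun x => le_max_right _ _),
    herm_posSemidef h _ (fun x => le_max_right _ _), ?_, ?_, ?_⟩
  · rw [herm_sub]
    exact (((herm_congr h _ id fun x => by rw [max_neg_eq]; simp)).trans (herm_id h)).symm
  · rw [herm_trace, posPartTrace_of_herm h]
    push_cast
    rfl
  · rw [herm_trace, ← sum_maxneg h]
    push_cast
    rfl

lemma psd_posPartTrace {A : Matrix n n ℂ} (hA : A.PosSemidef) :
    posPartTrace A = A.trace.re := by
  rw [posPartTrace_of_herm hA.1,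
    Finset.sum_congr rfl fun i _ => max_eq_left (hA.eigenvalues_nonneg i),
    trace_eq_sum_eig hA.1, Complex.re_sum]
  exact Finset.sum_congr rfl fun i _ => (Complex.ofReal_re _).symm

lemma posPartTrace_zero : posPartTrace (0 : Matrix n n ℂ) = 0 := by
  rw [psd_posPartTrace Matrix.PosSemidef.zero]
  simp

lemma pair_bound {A B : Matrix n n ℂ} (hA : A.PosSemidef) (hAt : A.trace = 1)
    (hB : B.PosSemidef) (hBt : B.trace = 1) {γ δ : ℝ} (hγ : 1 ≤ γ)
    (hle : posPartTrace (A - (γ : ℂ) • B) ≤ δ) :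
    posPartTrace (A - B) ≤ 1 - (1 - δ) / γ := by
  have hγ0 : (0 : ℝ) < γ := lt_of_lt_of_le one_pos hγ
  have hX : (A - B).IsHermitian := hA.1.sub hB.1
  have hY : (A - (γ : ℂ) • B).IsHermitian := hA.1.sub (isHermitian_real_smul hB.1 γ)
  obtain ⟨Q, hQ, hQ1, he⟩ := posPartTrace_attained hX
  have ht : posPartTrace (A - B) = (Q * A).trace.re - (Q * B).trace.re := by
    rw [← he, Matrix.mul_sub, Matrix.trace_sub, Complex.sub_re]
  have h1 : (Q * A).trace.re - γ * (Q * B).trace.re ≤ δ := by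
    have h2 := (posPartTrace_le hY hQ hQ1).trans hle
    have h3 : (Q * (A - (γ : ℂ) • B)).trace.re
        = (Q * A).trace.re - γ * (Q * B).trace.re := by
      rw [Matrix.mul_sub, Matrix.trace_sub, Complex.sub_re, Matrix.mul_smul, Matrix.trace_smul]
      simp [Complex.mul_re]
    linarith [h3 ▸ h2]
  have h4 : (Q * A).trace.re ≤ 1 := by
    have h5 := posPartTrace_le hA.1 hQ hQ1
    rw [psd_posPartTrace hA, hAt] at h5
    simpa using h5
  have h6 : 0 ≤ (Q * B).trace.re := by
    have h7 := posPartTrace_le hB.1.neg hQ hQ1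
    rw [posPartTrace_neg hB.1, psd_posPartTrace hB] at h7
    rw [Matrix.mul_neg, Matrix.trace_neg, Complex.neg_re] at h7
    linarith
  have hkey : (posPartTrace (A - B)) * γ ≤ γ - (1 - δ) := by
    rw [ht]
    nlinarith [mul_le_mul_of_nonneg_right h4 (sub_nonneg.mpr hγ)]
  have hd : 1 - (1 - δ) / γ = (γ - (1 - δ)) / γ := by field_simp
  rw [hd, le_div_iff₀ hγ0]
  exact hkey

lemma smul_psd {M : Matrix n n ℂ} (hM : M.PosSemidef) {c : ℝ} (hc : 0 ≤ c) :
    (((c : ℝ) : ℂ) • M).PosSemidef := by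
  refine posSemidef_iff_dotProduct_mulVec.mpr ⟨isHermitian_real_smul hM.1 c, fun x => ?_⟩
  rw [Matrix.smul_mulVec, dotProduct_smul, smul_eq_mul]
  exact mul_nonneg (Complex.zero_le_real.mpr hc) (hM.dotProduct_mulVec_nonneg x)

lemma cptp_psd {Φ : Matrix n n ℂ →ₗ[ℂ] Matrix n n ℂ} (hΦ : IsCPTP Φ)
    {ρ : Matrix n n ℂ} (hρ : ρ.PosSemidef) : (Φ ρ).PosSemidef := by
  have hX : (Matrix.of fun (p q : Fin 1 × n) => ρ p.2 q.2).PosSemidef :=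
    hρ.submatrix (Prod.snd : Fin 1 × n → n)
  have h2 : (Matrix.of fun p q : Fin 1 × n => Φ ρ p.2 q.2).PosSemidef :=
    hΦ.1 1 _ hX
  have h3 : Φ ρ = (Matrix.of fun p q : Fin 1 × n => Φ ρ p.2 q.2).submatrix
      (fun i : n => ((0 : Fin 1), i)) (fun i : n => ((0 : Fin 1), i)) := by
    ext i j; rfl
  rw [h3]
  exact h2.submatrix _

lemma cptp_herm {Φ : Matrix n n ℂ →ₗ[ℂ] Matrix n n ℂ} (hΦ : IsCPTP Φ)
    {Y : Matrix n n ℂ} (hY : Y.IsHermitian) : (Φ Y).IsHermitian := by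
  obtain ⟨R, S, hR, hS, hRS, -, -⟩ := herm_decomp hY
  rw [hRS, LinearMap.map_sub]
  exact ((cptp_psd hΦ hR).1).sub ((cptp_psd hΦ hS).1)

lemma trace_unitary_conj (V : Matrix.unitaryGroup n ℂ) (w : n → ℂ) :
    ((V : Matrix n n ℂ) * diagonal w * star (V : Matrix n n ℂ)).trace = ∑ i, w i := by
  rw [Matrix.trace_mul_cycle]
  rw [Matrix.mem_unitaryGroup_iff'.mp V.2, one_mul, trace_diagonal]

section
open scoped MatrixOrder

lemma sum_sqrt_eig_eq (hsq : (herm h (fun x => |x|)) ^ 2 = Xᴴ * X) :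
    (∑ i, (Real.sqrt ((Matrix.posSemidef_conjTranspose_mul_self X).1.eigenvalues i) : ℂ))
      = (herm h (fun x => |x|)).trace := by
  have hB : (Xᴴ * X).PosSemidef := Matrix.posSemidef_conjTranspose_mul_self X
  have hP : (herm h (fun x => |x|)).PosSemidef :=
    herm_posSemidef h _ fun x => abs_nonneg x
  have hPsqrt : CFC.sqrt (Xᴴ * X) = herm h (fun x => |x|) :=
    (CFC.sqrt_eq_iff _ _ hB.nonneg hP.nonneg).mpr (by rw [← pow_two, hsq])
  rw [← hPsqrt, CFC.sqrt_eq_cfc, cfc_nnreal_eq_real _ _ hB.nonneg, hB.1.cfc_eq,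
    IsHermitian.cfc, Unitary.conjStarAlgAut_apply, trace_unitary_conj]
  refine Finset.sum_congr rfl fun i _ => ?_
  rw [Function.comp_apply, Function.comp_apply, Real.coe_sqrt,
    Real.coe_toNNReal _ (hB.eigenvalues_nonneg i)]
  rfl

end

include h in
lemma traceNorm_herm : traceNorm X = posPartTrace X + posPartTrace (-X) := by
  have hB : (Xᴴ * X).PosSemidef := Matrix.posSemidef_conjTranspose_mul_self X
  have hP : (herm h (fun x => |x|)).PosSemidef :=
    herm_posSemidef h _ fun x => abs_nonneg x
  have hsq : (herm h (fun x => |x|)) ^ 2 = Xᴴ * X := by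
    rw [pow_two, herm_mul h]
    rw [herm_congr h (fun x => |x| * |x|) (fun x => x * x) fun x => abs_mul_abs_self x]
    have h9 : herm h (fun x => x * x) = X * X := by
      rw [show (fun x : ℝ => x * x) = (fun x => id x * id x) from rfl, ← herm_mul h id id,
        herm_id h]
    rw [h9, h.eq]
  have e1 : (∑ i, (Real.sqrt (hB.1.eigenvalues i) : ℂ)) = ∑ i, ((|h.eigenvalues i| : ℝ) : ℂ) :=
    (sum_sqrt_eig_eq h hsq).trans (herm_trace h _)
  have e2 : ∑ i, Real.sqrt (hB.1.eigenvalues i) = ∑ i, |h.eigenvalues i| := by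
    have := congrArg Complex.re e1
    simpa [Complex.re_sum] using this
  have e3 : traceNorm X = ∑ i, Real.sqrt (hB.1.eigenvalues i) := rfl
  rw [e3, e2, posPartTrace_neg h, ← sum_maxneg h, posPartTrace_of_herm h,
    ← Finset.sum_add_distrib]
  refine Finset.sum_congr rfl fun i _ => ?_
  rcases le_total 0 (h.eigenvalues i) with hx | hx
  · rw [abs_of_nonneg hx, max_eq_left hx, max_eq_right (neg_nonpos.mpr hx), add_zero]
  · rw [abs_of_nonpos hx, max_eq_right hx, max_eq_left (neg_nonneg.mpr hx), zero_add]

end LdpAux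

namespace LdpAux

open Matrix

variable {n : Type*} [Fintype n] [DecidableEq n]

lemma per_pair {Φ : Matrix n n ℂ →ₗ[ℂ] Matrix n n ℂ} (hΦ : IsCPTP Φ) {ε δ : ℝ}
    (hε : 0 ≤ ε)
    (hLDP : ∀ ρ σ : Matrix n n ℂ, IsDensity ρ → IsDensity σ →
      hsDiv (Real.exp ε) (Φ ρ) (Φ σ) ≤ δ)
    {ρ σ : Matrix n n ℂ} (hρ : IsDensity ρ) (hσ : IsDensity σ) :
    posPartTrace (Φ ρ - Φ σ) ≤ 1 - Real.exp (-ε) * (1 - δ) := by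
  have hγ : 1 ≤ Real.exp ε := by
    rw [show (1:ℝ) = Real.exp 0 by rw [Real.exp_zero]]
    exact Real.exp_le_exp.mpr hε
  have h1 := hLDP ρ σ hρ hσ
  rw [hsDiv] at h1
  have h2 := pair_bound (cptp_psd hΦ hρ.1) (by rw [hΦ.2, hρ.2])
    (cptp_psd hΦ hσ.1) (by rw [hΦ.2, hσ.2]) hγ h1
  have h3 : 1 - (1 - δ) / Real.exp ε = 1 - Real.exp (-ε) * (1 - δ) := by
    rw [Real.exp_neg, div_eq_mul_inv, mul_comm]
  linarith [h3 ▸ h2]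

lemma exp_coeff_nonneg {ε δ : ℝ} (hε : 0 ≤ ε) (hδ0 : 0 ≤ δ) (hδ1 : δ ≤ 1) :
    0 ≤ 1 - Real.exp (-ε) * (1 - δ) := by
  have h1 : Real.exp (-ε) ≤ 1 := by
    rw [show (1:ℝ) = Real.exp 0 by rw [Real.exp_zero]]
    exact Real.exp_le_exp.mpr (neg_nonpos.mpr hε)
  nlinarith [Real.exp_pos (-ε)]

lemma contract {Φ : Matrix n n ℂ →ₗ[ℂ] Matrix n n ℂ} (hΦ : IsCPTP Φ) {ε δ : ℝ}
    (hε : 0 ≤ ε) (hδ0 : 0 ≤ δ) (hδ1 : δ ≤ 1)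
    (hLDP : ∀ ρ σ : Matrix n n ℂ, IsDensity ρ → IsDensity σ →
      hsDiv (Real.exp ε) (Φ ρ) (Φ σ) ≤ δ)
    {ρ σ : Matrix n n ℂ} (hρ : IsDensity ρ) (hσ : IsDensity σ) :
    posPartTrace (Φ ρ - Φ σ)
      ≤ (1 - Real.exp (-ε) * (1 - δ)) * posPartTrace (ρ - σ) := by
  have hc0 := exp_coeff_nonneg hε hδ0 hδ1
  have hXh : (ρ - σ).IsHermitian := hρ.1.1.sub hσ.1.1
  obtain ⟨R, S, hR, hS, hRS, hRt, hSt⟩ := herm_decomp hXh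
  have htr0 : (ρ - σ).trace.re = 0 := by
    rw [Matrix.trace_sub, hρ.2, hσ.2]; simp
  have hSt' : S.trace = ((posPartTrace (ρ - σ) : ℝ) : ℂ) := by
    rw [hSt, htr0, sub_zero]
  rcases (posPartTrace_nonneg (ρ - σ)).eq_or_lt with h0 | hpos
  · have hR0 : R = 0 := psd_trace_zero hR (by rw [hRt, ← h0]; simp)
    have hS0 : S = 0 := psd_trace_zero hS (by rw [hSt', ← h0]; simp)
    have hρσ : ρ = σ := by
      have h5 := hRS
      rw [hR0, hS0, sub_zero] at h5
      exact sub_eq_zero.mp h5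
    rw [hρσ, sub_self, sub_self, posPartTrace_zero]
    exact mul_nonneg hc0 le_rfl
  · set t := posPartTrace (ρ - σ) with htdef
    have htne : t ≠ 0 := ne_of_gt hpos
    have hρ' : IsDensity (((t⁻¹ : ℝ) : ℂ) • R) := by
      refine ⟨smul_psd hR (inv_nonneg.mpr hpos.le), ?_⟩
      rw [Matrix.trace_smul, hRt, smul_eq_mul, ← Complex.ofReal_mul,
        inv_mul_cancel₀ htne, Complex.ofReal_one]
    have hσ' : IsDensity (((t⁻¹ : ℝ) : ℂ) • S) := by
      refine ⟨smul_psd hS (inv_nonneg.mpr hpos.le), ?_⟩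
      rw [Matrix.trace_smul, hSt', smul_eq_mul, ← Complex.ofReal_mul,
        inv_mul_cancel₀ htne, Complex.ofReal_one]
    have hpair := per_pair hΦ hε hLDP hρ' hσ'
    have heq : Φ ρ - Φ σ
        = ((t : ℝ) : ℂ) • (Φ (((t⁻¹ : ℝ) : ℂ) • R) - Φ (((t⁻¹ : ℝ) : ℂ) • S)) := by
      rw [LinearMap.map_smul, LinearMap.map_smul, ← smul_sub, smul_smul,
        show ((t : ℝ) : ℂ) * ((t⁻¹ : ℝ) : ℂ) = 1 by
          rw [← Complex.ofReal_mul, mul_inv_cancel₀ htne, Complex.ofReal_one],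
        one_smul, ← LinearMap.map_sub, ← LinearMap.map_sub, hRS]
    have hherm : (Φ (((t⁻¹ : ℝ) : ℂ) • R) - Φ (((t⁻¹ : ℝ) : ℂ) • S)).IsHermitian :=
      ((cptp_psd hΦ hρ'.1).1).sub ((cptp_psd hΦ hσ'.1).1)
    rw [heq, posPartTrace_smul hherm hpos.le, mul_comm]
    exact mul_le_mul_of_nonneg_right hpair hpos.le

end LdpAux


/-- Local differential privacy implies trace-distance contraction: if
`E_{e^ε}(A(ρ)‖A(σ)) ≤ δ` for all pairs of density operators, then
`η₁(A) ≤ 1 - e^{-ε}(1-δ)` and the trace distance contracts by that factor. -/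
theorem ldp_implies_trace_contraction {d : ℕ} (ε δ : ℝ)
    (hε : 0 ≤ ε) (hδ0 : 0 ≤ δ) (hδ1 : δ ≤ 1)
    (Φ : Matrix (Fin d) (Fin d) ℂ →ₗ[ℂ] Matrix (Fin d) (Fin d) ℂ) (hΦ : IsCPTP Φ)
    (hLDP : ∀ ρ σ : Matrix (Fin d) (Fin d) ℂ, IsDensity ρ → IsDensity σ →
      hsDiv (Real.exp ε) (Φ ρ) (Φ σ) ≤ δ) :
    contractionCoeff 1 Φ ≤ 1 - Real.exp (-ε) * (1 - δ) ∧
    ∀ ρ σ : Matrix (Fin d) (Fin d) ℂ, IsDensity ρ → IsDensity σ →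
      (1 / 2) * traceNorm (Φ ρ - Φ σ) ≤
        (1 - Real.exp (-ε) * (1 - δ)) * ((1 / 2) * traceNorm (ρ - σ)) := by
  have hc0 := LdpAux.exp_coeff_nonneg hε hδ0 hδ1
  have hone : ∀ ρ σ : Matrix (Fin d) (Fin d) ℂ, hsDiv 1 ρ σ = posPartTrace (ρ - σ) := by
    intro ρ σ
    rw [hsDiv, Complex.ofReal_one, one_smul]
  constructor
  · apply Real.sSup_le _ hc0
    rintro x ⟨ρ, σ, hρ, hσ, hpos, rfl⟩
    rw [hone] at hpos
    rw [hone, hone, div_le_iff₀ hpos]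
    exact LdpAux.contract hΦ hε hδ0 hδ1 hLDP hρ hσ
  · intro ρ σ hρ hσ
    have hXh : (ρ - σ).IsHermitian := hρ.1.1.sub hσ.1.1
    have hYh : (Φ ρ - Φ σ).IsHermitian :=
      ((LdpAux.cptp_psd hΦ hρ.1).1).sub ((LdpAux.cptp_psd hΦ hσ.1).1)
    have htr1 : (ρ - σ).trace.re = 0 := by
      rw [Matrix.trace_sub, hρ.2, hσ.2]; simp
    have htr2 : (Φ ρ - Φ σ).trace.re = 0 := by
      rw [Matrix.trace_sub, hΦ.2, hΦ.2, hρ.2, hσ.2]; simp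
    have e1 : (1 / 2 : ℝ) * traceNorm (Φ ρ - Φ σ) = posPartTrace (Φ ρ - Φ σ) := by
      rw [LdpAux.traceNorm_herm hYh, LdpAux.posPartTrace_neg hYh, htr2]; ring
    have e2 : (1 / 2 : ℝ) * traceNorm (ρ - σ) = posPartTrace (ρ - σ) := by
      rw [LdpAux.traceNorm_herm hXh, LdpAux.posPartTrace_neg hXh, htr1]; ring
    rw [e1, e2]
    exact LdpAux.contract hΦ hε hδ0 hδ1 hLDP hρ hσ
end
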